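/- Let T > 0, J = [0,T], and α > 0. Assume the continuous functions v, v₁, w, w₁ : J → ℝ and g : J × ℝ → ℝ satisfy v(t) ≤ v₁(t) + (1/Γ(α)) ∫₀ᵗ (t−s)^{α−1} g(s, v(s)) ds and w(t) ≥ w₁(t) + (1/Γ(α)) ∫₀ᵗ (t−s)^{α−1} g(s, w(s)) ds for all t ∈ J. Suppose further that for each fixed t ∈ J the map x ↦ g(t,x) is nondecreasing, and that v₁(t) < w₁(t) for all t ∈ J. Then v(t) < w(t) for all t ∈ J. -/

import Mathlib

open MeasureTheory Set

/-- Integrability of the weakly singular integrand. -/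
lemma volterra_integrable (T α t : ℝ) (hα : 0 < α) (ht : t ∈ Set.Icc 0 T)
    (u : ℝ → ℝ) (hu : ContinuousOn u (Set.Icc 0 T)) (g : ℝ → ℝ → ℝ)
    (hg_cont : ContinuousOn (fun p : ℝ × ℝ => g p.1 p.2) (Set.Icc 0 T ×ˢ Set.univ)) :
    IntervalIntegrable (fun s => (t - s) ^ (α - 1) * g s (u s)) volume 0 t := by
  have h1 : IntervalIntegrable (fun x : ℝ => x ^ (α - 1)) volume t 0 :=
    (intervalIntegral.intervalIntegrable_rpow' (by linarith)).symm
  have h2 : IntervalIntegrable (fun s : ℝ => (t - s) ^ (α - 1)) volume 0 t := by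
    simpa using h1.comp_sub_left t
  apply h2.mul_continuousOn
  have hsub : Set.uIcc (0:ℝ) t ⊆ Set.Icc 0 T := by
    rw [Set.uIcc_of_le ht.1]
    exact Set.Icc_subset_Icc le_rfl ht.2
  have : ContinuousOn (fun s => g s (u s)) (Set.Icc 0 T) := by
    apply hg_cont.comp (continuousOn_id.prodMk hu)
    intro x hx; exact ⟨hx, Set.mem_univ _⟩
  exact this.mono hsub

theorem volterra_comparison
    (T α : ℝ) (hT : 0 < T) (hα : 0 < α)
    (v v₁ w w₁ : ℝ → ℝ) (g : ℝ → ℝ → ℝ)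
    (hv_cont : ContinuousOn v (Set.Icc 0 T)) (hv₁_cont : ContinuousOn v₁ (Set.Icc 0 T))
    (hw_cont : ContinuousOn w (Set.Icc 0 T)) (hw₁_cont : ContinuousOn w₁ (Set.Icc 0 T))
    (hg_cont : ContinuousOn (fun p : ℝ × ℝ => g p.1 p.2) (Set.Icc 0 T ×ˢ Set.univ))
    (hv : ∀ t ∈ Set.Icc (0 : ℝ) T,
      v t ≤ v₁ t + (1 / Real.Gamma α) * ∫ s in (0 : ℝ)..t, (t - s) ^ (α - 1) * g s (v s))
    (hw : ∀ t ∈ Set.Icc (0 : ℝ) T,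
      w t ≥ w₁ t + (1 / Real.Gamma α) * ∫ s in (0 : ℝ)..t, (t - s) ^ (α - 1) * g s (w s))
    (hg_mono : ∀ t ∈ Set.Icc (0 : ℝ) T, Monotone (fun x => g t x))
    (h₁ : ∀ t ∈ Set.Icc (0 : ℝ) T, v₁ t < w₁ t) :
    ∀ t ∈ Set.Icc (0 : ℝ) T, v t < w t := by
  by_contra hcon
  push_neg at hcon
  obtain ⟨t₁, ht₁, hwt₁⟩ := hcon
  -- the set where the conclusion fails
  set S : Set ℝ := Set.Icc 0 T ∩ (fun t => w t - v t) ⁻¹' Set.Iic 0 with hS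
  have hSne : S.Nonempty := ⟨t₁, ht₁, by simp [Set.mem_preimage]; linarith⟩
  have hSclosed : IsClosed S :=
    ((hw_cont.sub hv_cont).preimage_isClosed_of_isClosed isClosed_Icc isClosed_Iic)
  have hScompact : IsCompact S :=
    (isCompact_Icc : IsCompact (Set.Icc (0:ℝ) T)).of_isClosed_subset hSclosed
      Set.inter_subset_left
  obtain ⟨t₀, ht₀S, ht₀least⟩ := hScompact.exists_isLeast hSne
  obtain ⟨ht₀Icc, ht₀le⟩ := ht₀S
  have hwv₀ : w t₀ ≤ v t₀ := by
    have := ht₀le; simp [Set.mem_preimage] at this; linarith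
  -- t₀ > 0
  have h0 : v 0 < w 0 := by
    have hv0 := hv 0 (Set.left_mem_Icc.2 hT.le)
    have hw0 := hw 0 (Set.left_mem_Icc.2 hT.le)
    simp [intervalIntegral.integral_same] at hv0 hw0
    have := h₁ 0 (Set.left_mem_Icc.2 hT.le)
    linarith
  have ht₀pos : 0 < t₀ := by
    rcases lt_or_eq_of_le ht₀Icc.1 with h | h
    · exact h
    · exfalso; rw [← h] at hwv₀; linarith
  -- strict inequality before t₀
  have hbefore : ∀ s ∈ Set.Ico 0 t₀, v s < w s := by
    intro s hs
    by_contra hle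
    push_neg at hle
    have hsS : s ∈ S := ⟨⟨hs.1, hs.2.le.trans ht₀Icc.2⟩, by simp [Set.mem_preimage]; linarith⟩
    exact absurd (ht₀least hsS) (not_le.2 hs.2)
  -- integrability
  have hIv := volterra_integrable T α t₀ hα ht₀Icc v hv_cont g hg_cont
  have hIw := volterra_integrable T α t₀ hα ht₀Icc w hw_cont g hg_cont
  -- a.e. comparison of integrands on Icc 0 t₀
  have hae : (fun s => (t₀ - s) ^ (α - 1) * g s (v s))
      ≤ᵐ[volume.restrict (Set.Icc 0 t₀)] (fun s => (t₀ - s) ^ (α - 1) * g s (w s)) := by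
    have hne : ∀ᵐ s ∂(volume.restrict (Set.Icc 0 t₀)), s ≠ t₀ := by
      refine MeasureTheory.ae_restrict_of_ae (MeasureTheory.ae_iff.2 ?_)
      simp [not_ne_iff, MeasureTheory.measure_singleton]
    have hmem : ∀ᵐ s ∂(volume.restrict (Set.Icc 0 t₀)), s ∈ Set.Icc 0 t₀ :=
      MeasureTheory.ae_restrict_mem measurableSet_Icc
    filter_upwards [hne, hmem] with s hsne hsIcc
    have hsIco : s ∈ Set.Ico 0 t₀ := ⟨hsIcc.1, lt_of_le_of_ne hsIcc.2 hsne⟩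
    have hsT : s ∈ Set.Icc 0 T := ⟨hsIcc.1, hsIcc.2.trans ht₀Icc.2⟩
    have hg_le : g s (v s) ≤ g s (w s) := hg_mono s hsT (hbefore s hsIco).le
    have hpow : (0:ℝ) ≤ (t₀ - s) ^ (α - 1) := Real.rpow_nonneg (by linarith [hsIcc.2]) _
    exact mul_le_mul_of_nonneg_left hg_le hpow
  have hint : (∫ s in (0:ℝ)..t₀, (t₀ - s) ^ (α - 1) * g s (v s))
      ≤ ∫ s in (0:ℝ)..t₀, (t₀ - s) ^ (α - 1) * g s (w s) :=
    intervalIntegral.integral_mono_ae_restrict ht₀pos.le hIv hIw hae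
  have hΓ : 0 < 1 / Real.Gamma α := by
    have := Real.Gamma_pos_of_pos hα; positivity
  have hv₀ := hv t₀ ht₀Icc
  have hw₀ := hw t₀ ht₀Icc
  have h₁₀ := h₁ t₀ ht₀Icc
  nlinarith [mul_le_mul_of_nonneg_left hint hΓ.le]
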